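/- Let ζ = ξ + iη ∈ ℂ^{n+1} with ξ, η ∈ ℝ^{n+1}, η ≠ 0. The set γ_ℂ(ζ) = {x ∈ ℝ^{n+1} : Σ_j (x_j − ζ_j)² = 0} is contained in the sphere of radius r = √(|ξ|²cos²θ + (|ξ| sin θ + |η|)²) centered at the origin, where θ = ∠(ξ,η) is the angle between ξ and η; in particular every x ∈ γ_ℂ(ζ) satisfies |x| ≤ √(|ξ|² + |η|² + 2(|ξ|²|η|² − ⟨ξ,η⟩²)^{1/2}). -/

import Mathlib

open scoped RealInnerProductSpace

private lemma gammaC_key (n : ℕ) (ξ η x : EuclideanSpace ℝ (Fin (n + 1))) (hη : η ≠ 0)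
    (h1 : ∑ j, ((x j - ξ j)^2 - (η j)^2) = 0) (h2 : ∑ j, (x j - ξ j) * η j = 0) :
    ‖x‖ ^ 2 ≤ ‖ξ‖ ^ 2 + ‖η‖ ^ 2 + 2 * Real.sqrt (‖ξ‖ ^ 2 * ‖η‖ ^ 2 - ⟪ξ, η⟫ ^ 2) := by
  have hη0 : (0:ℝ) < ‖η‖ := norm_pos_iff.mpr hη
  have hA : ‖x - ξ‖ ^ 2 = ‖η‖ ^ 2 := by
    have e1 : ⟪x - ξ, x - ξ⟫ = ∑ j, (x j - ξ j)^2 := by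
      rw [PiLp.inner_apply]
      simp [PiLp.sub_apply, pow_two]
    have e2 : ⟪η, η⟫ = ∑ j, (η j)^2 := by
      rw [PiLp.inner_apply]
      simp [pow_two]
    rw [← real_inner_self_eq_norm_sq, ← real_inner_self_eq_norm_sq, e1, e2]
    rw [Finset.sum_sub_distrib] at h1
    linarith
  have hB : ⟪x - ξ, η⟫ = 0 := by
    have : ⟪x - ξ, η⟫ = ∑ j, (x j - ξ j) * η j := by
      simp [PiLp.inner_apply, PiLp.sub_apply, mul_comm]
    rw [this, h2]
  obtain ⟨p, hp⟩ : ∃ p : ℝ, ⟪ξ, η⟫ = p := ⟨_, rfl⟩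
  rw [hp]
  set a : ℝ := p / ‖η‖^2 with ha
  have hne : ‖η‖ ≠ 0 := hη0.ne'
  have hxi' : ‖ξ - a • η‖ ^ 2 = ‖ξ‖^2 - p^2 / ‖η‖^2 := by
    rw [← real_inner_self_eq_norm_sq, real_inner_sub_sub_self, real_inner_smul_right,
      real_inner_smul_left, real_inner_smul_right, real_inner_self_eq_norm_sq,
      real_inner_self_eq_norm_sq, hp, ha]
    field_simp
    ring
  have hkey : ⟪ξ, x - ξ⟫ ≤ Real.sqrt (‖ξ‖ ^ 2 * ‖η‖ ^ 2 - p ^ 2) := by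
    have hB' : ⟪η, x - ξ⟫ = 0 := by rw [real_inner_comm]; exact hB
    have h3 : ⟪ξ, x - ξ⟫ = ⟪ξ - a • η, x - ξ⟫ := by
      rw [inner_sub_left, real_inner_smul_left, hB']
      ring
    have h4 : ⟪ξ - a • η, x - ξ⟫ ≤ ‖ξ - a • η‖ * ‖x - ξ‖ := real_inner_le_norm _ _
    have h5 : ‖ξ - a • η‖ * ‖x - ξ‖ = Real.sqrt (‖ξ‖ ^ 2 * ‖η‖ ^ 2 - p ^ 2) := by
      have hxn : ‖x - ξ‖ = ‖η‖ := by
        nlinarith [norm_nonneg (x - ξ), norm_nonneg η]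
      rw [hxn, ← Real.sqrt_sq (norm_nonneg (ξ - a • η)), ← Real.sqrt_sq hη0.le,
        ← Real.sqrt_mul (sq_nonneg _), hxi']
      congr 1
      field_simp
      rw [Real.sq_sqrt (sq_nonneg _)]
    linarith [h3, h4, h5.le]
  have hx2 : ‖x‖ ^ 2 = ‖ξ‖ ^ 2 + 2 * ⟪ξ, x - ξ⟫ + ‖x - ξ‖ ^ 2 := by
    have hxe : x = ξ + (x - ξ) := by abel
    nth_rewrite 1 [hxe]
    exact norm_add_sq_real _ _
  rw [hx2, hA]
  linarith

/-- For `ζ = ξ + iη` with `η ≠ 0`, every `x ∈ γ_ℂ(ζ)` (that is,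
`Σ_j (x_j − ζ_j)² = 0`) satisfies `|x| ≤ √(|ξ|²cos²θ + (|ξ|sinθ + |η|)²)` where
`θ = ∠(ξ,η)`, and in particular `|x| ≤ √(|ξ|² + |η|² + 2(|ξ|²|η|² − ⟨ξ,η⟩²)^{1/2})`. -/
theorem gammaC_subset_sphere (n : ℕ) (ξ η : EuclideanSpace ℝ (Fin (n + 1)))
    (hη : η ≠ 0) (x : EuclideanSpace ℝ (Fin (n + 1)))
    (hx : ∑ j, ((x j : ℂ) - ((ξ j : ℂ) + (η j : ℂ) * Complex.I)) ^ 2 = 0) :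
    ‖x‖ ≤ Real.sqrt (‖ξ‖ ^ 2 * Real.cos (InnerProductGeometry.angle ξ η) ^ 2 +
        (‖ξ‖ * Real.sin (InnerProductGeometry.angle ξ η) + ‖η‖) ^ 2) ∧
    ‖x‖ ≤ Real.sqrt (‖ξ‖ ^ 2 + ‖η‖ ^ 2 +
        2 * Real.sqrt (‖ξ‖ ^ 2 * ‖η‖ ^ 2 - ⟪ξ, η⟫ ^ 2)) := by
  -- Extract the real and imaginary parts of the defining equation.
  have hterm : ∀ j, ((x j : ℂ) - ((ξ j : ℂ) + (η j : ℂ) * Complex.I)) ^ 2 =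
      (((x j - ξ j)^2 - (η j)^2 : ℝ) : ℂ) + ((-2*((x j - ξ j)*(η j)) : ℝ) : ℂ) * Complex.I := by
    intro j
    apply Complex.ext <;>
      simp [pow_two, Complex.add_re, Complex.add_im, Complex.mul_re, Complex.mul_im] <;> ring
  rw [Finset.sum_congr rfl (fun j _ => hterm j)] at hx
  rw [Finset.sum_add_distrib, ← Finset.sum_mul, ← Complex.ofReal_sum, ← Complex.ofReal_sum] at hx
  rw [Complex.ext_iff] at hx
  simp only [Complex.add_re, Complex.add_im, Complex.ofReal_re, Complex.ofReal_im, Complex.mul_re,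
    Complex.mul_im, Complex.I_re, Complex.I_im, Complex.zero_re, Complex.zero_im, mul_zero,
    mul_one, zero_mul, sub_zero, zero_add, add_zero] at hx
  have h1 : ∑ j, ((x j - ξ j)^2 - (η j)^2) = 0 := hx.1
  have h2 : ∑ j, (x j - ξ j) * η j = 0 := by
    have h2' := hx.2
    have hfac : ∑ j, (-2*((x j - ξ j)*(η j))) = -2 * ∑ j, (x j - ξ j)*(η j) := by
      rw [Finset.mul_sum]
    rw [hfac] at h2'
    linarith
  -- Main quadratic estimate.
  have hmain := gammaC_key n ξ η x hη h1 h2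
  have hxle : ‖x‖ ≤ Real.sqrt (‖ξ‖ ^ 2 + ‖η‖ ^ 2 +
      2 * Real.sqrt (‖ξ‖ ^ 2 * ‖η‖ ^ 2 - ⟪ξ, η⟫ ^ 2)) := by
    rw [show ‖x‖ = Real.sqrt (‖x‖ ^ 2) from (Real.sqrt_sq (norm_nonneg x)).symm]
    exact Real.sqrt_le_sqrt hmain
  refine ⟨?_, hxle⟩
  -- The two radii agree.
  have hsin := InnerProductGeometry.sin_angle_mul_norm_mul_norm ξ η
  rw [real_inner_self_eq_norm_sq, real_inner_self_eq_norm_sq, ← sq ⟪ξ, η⟫] at hsin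
  have hpyth := Real.sin_sq_add_cos_sq (InnerProductGeometry.angle ξ η)
  have harg : ‖ξ‖ ^ 2 * Real.cos (InnerProductGeometry.angle ξ η) ^ 2 +
      (‖ξ‖ * Real.sin (InnerProductGeometry.angle ξ η) + ‖η‖) ^ 2 =
      ‖ξ‖ ^ 2 + ‖η‖ ^ 2 + 2 * Real.sqrt (‖ξ‖ ^ 2 * ‖η‖ ^ 2 - ⟪ξ, η⟫ ^ 2) := by
    nlinarith [hsin, hpyth]
  rw [harg]
  exact hxle
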